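/- Let F(θ) = (1/n)Σ_{j=1}^n F_j(θ) where each ∇F_j is L-Lipschitz. Fix θ^(k), a restriction R with P = Rᵀ, ‖R‖ ≤ 1, ‖P‖ ≤ 1. For a uniformly random single index j (batch size b = 1), define the variance-reduced coarse gradient G_j(θ̂) := R∇F_j(θ̃) + R∇F(θ^(k)) − R∇F_j(θ^(k)) with θ̃ := θ^(k) + P(θ̂ − Rθ^(k)). Then E_j[G_j(θ̂)] = R∇F(θ̃) and E_j[‖G_j(θ̂) − R∇F(θ̃)‖²] ≤ L²‖θ̂ − Rθ^(k)‖². -/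

import Mathlib

open RealInnerProductSpace Finset

lemma aux_R_norm {d D : ℕ} (ι : Fin D → Fin d) (hι : Function.Injective ι)
    (x : EuclideanSpace ℝ (Fin d)) (y : EuclideanSpace ℝ (Fin D))
    (hy : ∀ i, y i = x (ι i)) : ‖y‖ ≤ ‖x‖ := by
  rw [EuclideanSpace.norm_eq, EuclideanSpace.norm_eq]
  apply Real.sqrt_le_sqrt
  calc ∑ i : Fin D, ‖y i‖ ^ 2 = ∑ j ∈ Finset.univ.image ι, ‖x j‖ ^ 2 := by
        rw [Finset.sum_image (by intros a _ b _ h; exact hι h)]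
        exact Finset.sum_congr rfl fun i _ => by rw [hy]
    _ ≤ ∑ j : Fin d, ‖x j‖ ^ 2 := Finset.sum_le_sum_of_subset_of_nonneg
        (Finset.subset_univ _) (by intros; positivity)

lemma aux_P_norm {d D : ℕ} (ι : Fin D → Fin d) (hι : Function.Injective ι)
    (x : EuclideanSpace ℝ (Fin D)) (y : EuclideanSpace ℝ (Fin d))
    (hy : ∀ j, y j = ∑ i, if ι i = j then x i else 0) : ‖y‖ = ‖x‖ := by
  rw [EuclideanSpace.norm_eq, EuclideanSpace.norm_eq]
  congr 1
  have h0 : ∀ j ∈ Finset.univ, j ∉ Finset.univ.image ι → ‖y j‖ ^ 2 = 0 := by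
    intro j _ hj
    have : y j = 0 := by
      rw [hy]
      apply Finset.sum_eq_zero
      intro i _
      rw [if_neg]
      intro h; exact hj (Finset.mem_image.2 ⟨i, Finset.mem_univ i, h⟩)
    simp [this]
  rw [← Finset.sum_subset (Finset.subset_univ (Finset.univ.image ι)) h0,
    Finset.sum_image (by intros a _ b _ h; exact hι h)]
  refine Finset.sum_congr rfl fun i0 _ => ?_
  have : y (ι i0) = x i0 := by
    rw [hy]
    simp [hι.eq_iff]
  rw [this]

lemma aux_var {E : Type*} [NormedAddCommGroup E] [InnerProductSpace ℝ E] {n : ℕ}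
    (X : Fin n → E) (m : E) (hm : (n : ℝ) • m = ∑ j, X j) :
    ∑ j, ‖X j - m‖ ^ 2 ≤ ∑ j, ‖X j‖ ^ 2 := by
  have expand : ∀ j : Fin n, ‖X j - m‖ ^ 2 = ‖X j‖ ^ 2 - 2 * ⟪X j, m⟫ + ‖m‖ ^ 2 :=
    fun j => norm_sub_sq_real (X j) m
  have hsum : ∑ j, ‖X j - m‖ ^ 2
      = ∑ j, ‖X j‖ ^ 2 - 2 * ⟪∑ j, X j, m⟫ + (n : ℝ) * ‖m‖ ^ 2 := by
    rw [Finset.sum_congr rfl (fun j _ => expand j)]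
    rw [Finset.sum_add_distrib, Finset.sum_sub_distrib, ← Finset.mul_sum, ← sum_inner]
    simp [Finset.card_univ]
  rw [hsum, ← hm, real_inner_smul_left, real_inner_self_eq_norm_sq]
  nlinarith [sq_nonneg ‖m‖, Nat.cast_nonneg (α := ℝ) n]
lemma esum_apply {k m : ℕ} (v : Fin m → EuclideanSpace ℝ (Fin k)) (a : Fin k) :
    (∑ j, v j) a = ∑ j, v j a := by
  rw [WithLp.ofLp_sum]; exact Finset.sum_apply a Finset.univ _

theorem variance_reduced_coarse_gradient_single_sample {d D n : ℕ} (hn : 0 < n)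
    (L : ℝ) (hL : 0 ≤ L)
    (F : Fin n → EuclideanSpace ℝ (Fin d) → ℝ)
    (gF : Fin n → EuclideanSpace ℝ (Fin d) → EuclideanSpace ℝ (Fin d))
    (hgrad : ∀ j x, HasGradientAt (F j) (gF j x) x)
    (hlip : ∀ j x y, ‖gF j x - gF j y‖ ≤ L * ‖x - y‖)
    (ι : Fin D → Fin d) (hι : Function.Injective ι)
    (θk : EuclideanSpace ℝ (Fin d)) (θc : EuclideanSpace ℝ (Fin D)) :
    let Rop : EuclideanSpace ℝ (Fin d) → EuclideanSpace ℝ (Fin D) := fun x => WithLp.toLp 2 (fun i => x (ι i))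
    let Pop : EuclideanSpace ℝ (Fin D) → EuclideanSpace ℝ (Fin d) :=
      fun x => WithLp.toLp 2 (fun j => ∑ i, if ι i = j then x i else 0)
    let gradF : EuclideanSpace ℝ (Fin d) → EuclideanSpace ℝ (Fin d) :=
      fun x => (n : ℝ)⁻¹ • ∑ j, gF j x
    let θt := θk + Pop (θc - Rop θk)
    let Gj : Fin n → EuclideanSpace ℝ (Fin D) :=
      fun j => Rop (gF j θt) + Rop (gradF θk) - Rop (gF j θk)
    ((n : ℝ)⁻¹ • ∑ j, Gj j = Rop (gradF θt)) ∧
      (n : ℝ)⁻¹ * ∑ j, ‖Gj j - Rop (gradF θt)‖^2 ≤ L^2 * ‖θc - Rop θk‖^2 := by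
  intro Rop Pop gradF θt Gj
  have hn0 : (n : ℝ) ≠ 0 := Nat.cast_ne_zero.2 hn.ne'
  constructor
  · ext i
    simp only [Gj, Rop, gradF, PiLp.smul_apply, PiLp.add_apply, PiLp.sub_apply, PiLp.toLp_apply,
      esum_apply, smul_eq_mul]
    rw [Finset.sum_sub_distrib, Finset.sum_add_distrib]
    rw [Finset.sum_const, Finset.card_univ, Fintype.card_fin, nsmul_eq_mul]
    field_simp
    ring
  · set m : EuclideanSpace ℝ (Fin d) := gradF θt - gradF θk with hmdef
    set X : Fin n → EuclideanSpace ℝ (Fin d) := fun j => gF j θt - gF j θk with hX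
    have hm : (n : ℝ) • m = ∑ j, X j := by
      simp only [hmdef, gradF, hX]
      rw [smul_sub, smul_smul, smul_smul, mul_inv_cancel₀ hn0, one_smul, one_smul,
        ← Finset.sum_sub_distrib]
    have hR : ∀ j, ‖Gj j - Rop (gradF θt)‖ ≤ ‖X j - m‖ := by
      intro j
      apply aux_R_norm ι hι
      intro i
      simp only [Gj, Rop, hX, hmdef, PiLp.sub_apply, PiLp.add_apply, PiLp.toLp_apply]
      ring
    have hθ : ‖θt - θk‖ = ‖θc - Rop θk‖ := by
      apply aux_P_norm ι hι
      intro j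
      simp only [θt, Pop, PiLp.add_apply, PiLp.sub_apply, PiLp.toLp_apply]
      ring
    have hXb : ∀ j, ‖X j‖ ≤ L * ‖θc - Rop θk‖ := by
      intro j
      calc ‖X j‖ ≤ L * ‖θt - θk‖ := hlip j θt θk
        _ = L * ‖θc - Rop θk‖ := by rw [hθ]
    have key : ∑ j, ‖Gj j - Rop (gradF θt)‖ ^ 2 ≤ (n : ℝ) * (L ^ 2 * ‖θc - Rop θk‖ ^ 2) := by
      calc ∑ j, ‖Gj j - Rop (gradF θt)‖ ^ 2 ≤ ∑ j, ‖X j - m‖ ^ 2 :=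
            Finset.sum_le_sum fun j _ => by
              have := hR j
              nlinarith [norm_nonneg (Gj j - Rop (gradF θt)), norm_nonneg (X j - m)]
        _ ≤ ∑ j, ‖X j‖ ^ 2 := aux_var X m hm
        _ ≤ ∑ _j : Fin n, L ^ 2 * ‖θc - Rop θk‖ ^ 2 :=
            Finset.sum_le_sum fun j _ => by
              have := hXb j
              nlinarith [norm_nonneg (X j), norm_nonneg (θc - Rop θk)]
        _ = (n : ℝ) * (L ^ 2 * ‖θc - Rop θk‖ ^ 2) := by
            rw [Finset.sum_const, Finset.card_univ, Fintype.card_fin]; ring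
    rw [inv_mul_le_iff₀ (by positivity)]
    linarith [key]
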